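/- Fix 0 < q < 1, integers n ≥ 1 and a permutation π ∈ S_n. Let G_1, ..., G_n be i.i.d. geometric random variables with P(G_i = k) = q^k(1-q). Then the probability that G_{π(1)} ⊵_1 G_{π(2)} ⊵_2 ... ⊵_{n-1} G_{π(n)}, where ⊵_i denotes strict inequality > if i is a descent of π and weak inequality ≥ otherwise, equals q^{maj(π)} / [n]_q!. -/

import Mathlib

open MeasureTheory ProbabilityTheory

/-- The major index of a word `w` of length `N`. -/
def wmaj {N : ℕ} {α : Type*} [LinearOrder α] (w : Fin N → α) : ℕ :=
  ∑ i ∈ Finset.range (N - 1),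
    if h : i + 1 < N then
      (if w ⟨i + 1, h⟩ < w ⟨i, Nat.lt_of_succ_lt h⟩ then i + 1 else 0)
    else 0

/-- The major index of a permutation. -/
def maj {n : ℕ} (π : Equiv.Perm (Fin n)) : ℕ := wmaj (fun i => π i)

/-- The `q`-integer `[m]_q = 1 + q + ⋯ + q^{m-1}`. -/
def qint (q : ℝ) (m : ℕ) : ℝ := ∑ j ∈ Finset.range m, q ^ j

/-- The `q`-factorial `[n]_q! = ∏_{i=1}^n [i]_q`. -/
def qfact (q : ℝ) (n : ℕ) : ℝ := ∏ i ∈ Finset.range n, qint q (i + 1)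

/-- The conditionally descending chain: `G (π i) ⊵ᵢ G (π (i+1))`, strict if `i` is a
descent of `π` and weak otherwise. -/
def DescChain {n : ℕ} (G : Fin n → ℕ) (π : Equiv.Perm (Fin n)) : Prop :=
  ∀ i : ℕ, ∀ h : i + 1 < n,
    if π ⟨i + 1, h⟩ < π ⟨i, Nat.lt_of_succ_lt h⟩ then
      G (π ⟨i + 1, h⟩) < G (π ⟨i, Nat.lt_of_succ_lt h⟩)
    else
      G (π ⟨i + 1, h⟩) ≤ G (π ⟨i, Nat.lt_of_succ_lt h⟩)

namespace DCP

variable {m : ℕ} (π : Equiv.Perm (Fin (m + 1)))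

/-- descent indicator -/
def ds (i : ℕ) : ℕ :=
  if h : i + 1 < m + 1 then
    (if π ⟨i + 1, h⟩ < π ⟨i, Nat.lt_of_succ_lt h⟩ then 1 else 0)
  else 0

lemma ds_last : ds π m = 0 := by simp [ds]

/-- unified chain condition -/
def Chain (u : Fin (m + 1) → ℕ) : Prop :=
  ∀ i : ℕ, ∀ h : i + 1 < m + 1, u ⟨i + 1, h⟩ + ds π i ≤ u ⟨i, Nat.lt_of_succ_lt h⟩

def Phi (d : Fin (m + 1) → ℕ) (i : Fin (m + 1)) : ℕ :=
  ∑ j ∈ Finset.Ici i, (d j + ds π (j : ℕ))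

def Psi (u : Fin (m + 1) → ℕ) (i : Fin (m + 1)) : ℕ :=
  u i - (if h : (i : ℕ) + 1 < m + 1 then u ⟨(i : ℕ) + 1, h⟩ else 0) - ds π (i : ℕ)

lemma Ici_last : Finset.Ici (Fin.last m) = {Fin.last m} := by
  ext j; simp [Fin.last_le_iff, eq_comm]

lemma Ici_castSucc (i : Fin m) :
    Finset.Ici i.castSucc = insert i.castSucc (Finset.Ici i.succ) := by
  ext j
  simp only [Finset.mem_Ici, Finset.mem_insert, Fin.le_def, Fin.coe_castSucc, Fin.val_succ,
    Fin.ext_iff]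
  omega

lemma castSucc_not_mem (i : Fin m) : i.castSucc ∉ Finset.Ici i.succ := by
  simp [Fin.le_def]

lemma Phi_last (d : Fin (m + 1) → ℕ) : Phi π d (Fin.last m) = d (Fin.last m) := by
  rw [Phi, Ici_last, Finset.sum_singleton]
  simp [ds_last]

lemma Phi_castSucc (d : Fin (m + 1) → ℕ) (i : Fin m) :
    Phi π d i.castSucc = (d i.castSucc + ds π (i : ℕ)) + Phi π d i.succ := by
  rw [Phi, Ici_castSucc, Finset.sum_insert (castSucc_not_mem i), Phi, Fin.coe_castSucc]

lemma chain_Phi (d : Fin (m + 1) → ℕ) : Chain π (Phi π d) := by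
  intro i h
  have hi : i < m := by omega
  have h1 : (⟨i, Nat.lt_of_succ_lt h⟩ : Fin (m + 1)) = (⟨i, hi⟩ : Fin m).castSucc := rfl
  have h2 : (⟨i + 1, h⟩ : Fin (m + 1)) = (⟨i, hi⟩ : Fin m).succ := rfl
  rw [h1, h2, Phi_castSucc]
  simp only [Fin.val_mk]
  omega

lemma Psi_Phi (d : Fin (m + 1) → ℕ) : Psi π (Phi π d) = d := by
  funext i
  induction i using Fin.lastCases with
  | last =>
      rw [Psi, Phi_last]
      simp [ds_last]
  | cast i =>
      rw [Psi]
      have hc : ((i.castSucc : Fin (m + 1)) : ℕ) + 1 < m + 1 := by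
        simp
      rw [dif_pos hc]
      have h2 : (⟨((i.castSucc : Fin (m + 1)) : ℕ) + 1, hc⟩ : Fin (m + 1)) = i.succ := rfl
      rw [h2, Phi_castSucc, Fin.coe_castSucc]
      omega

lemma Phi_Psi {u : Fin (m + 1) → ℕ} (hu : Chain π u) : Phi π (Psi π u) = u := by
  funext i
  induction i using Fin.reverseInduction with
  | last =>
      rw [Phi_last, Psi]
      simp [ds_last]
  | cast i ih =>
      rw [Phi_castSucc, ih, Psi]
      have hc : ((i.castSucc : Fin (m + 1)) : ℕ) + 1 < m + 1 := by
        simp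
      rw [dif_pos hc]
      have h2 : (⟨((i.castSucc : Fin (m + 1)) : ℕ) + 1, hc⟩ : Fin (m + 1)) = i.succ := rfl
      rw [h2, Fin.coe_castSucc]
      have := hu i ((by omega : i.val + 1 < m + 1))
      have h3 : (⟨(i : ℕ) + 1, by omega⟩ : Fin (m + 1)) = i.succ := rfl
      have h4 : (⟨(i : ℕ), by omega⟩ : Fin (m + 1)) = i.castSucc := rfl
      rw [h3, h4] at this
      omega

/-- the chains as an equiv -/
def chainEquiv : (Fin (m + 1) → ℕ) ≃ {u : Fin (m + 1) → ℕ // Chain π u} where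
  toFun d := ⟨Phi π d, chain_Phi π d⟩
  invFun u := Psi π u
  left_inv d := Psi_Phi π d
  right_inv u := Subtype.ext (Phi_Psi π u.2)

lemma sum_Phi (d : Fin (m + 1) → ℕ) :
    ∑ i, Phi π d i = ∑ j : Fin (m + 1), ((j : ℕ) + 1) * (d j + ds π (j : ℕ)) := by
  have hIci : ∀ i : Fin (m + 1), Finset.Ici i = Finset.univ.filter (fun j => i ≤ j) := by
    intro i; ext j; simp
  unfold Phi
  calc ∑ i : Fin (m+1), ∑ j ∈ Finset.Ici i, (d j + ds π (j : ℕ))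
      = ∑ i : Fin (m+1), ∑ j : Fin (m+1), if i ≤ j then (d j + ds π (j : ℕ)) else 0 := by
        refine Finset.sum_congr rfl fun i _ => ?_
        rw [hIci, Finset.sum_filter]
    _ = ∑ j : Fin (m+1), ∑ i : Fin (m+1), if i ≤ j then (d j + ds π (j : ℕ)) else 0 :=
        Finset.sum_comm
    _ = ∑ j : Fin (m+1), ((j : ℕ) + 1) * (d j + ds π (j : ℕ)) := by
        refine Finset.sum_congr rfl fun j _ => ?_
        rw [← Finset.sum_filter]
        have : Finset.univ.filter (fun i : Fin (m+1) => i ≤ j) = Finset.Iic j := by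
          ext i; simp
        rw [this, Finset.sum_const, Fin.card_Iic, smul_eq_mul]

lemma maj_eq : maj π = ∑ j : Fin (m + 1), ((j : ℕ) + 1) * ds π (j : ℕ) := by
  rw [maj, wmaj]
  have h1 : ∀ i ∈ Finset.range ((m + 1) - 1),
      (if h : i + 1 < m + 1 then
        (if π ⟨i + 1, h⟩ < π ⟨i, Nat.lt_of_succ_lt h⟩ then i + 1 else 0)
      else 0) = (i + 1) * ds π i := by
    intro i hi
    simp only [Finset.mem_range] at hi
    have h : i + 1 < m + 1 := by omega
    rw [dif_pos h, ds, dif_pos h]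
    split <;> simp
  rw [Finset.sum_congr rfl h1]
  rw [Fin.sum_univ_eq_sum_range (fun j => (j + 1) * ds π j)]
  have : (m + 1) - 1 = m := rfl
  rw [this]
  rw [Finset.sum_range_succ, ds_last, Nat.mul_zero, Nat.add_zero]

open scoped ENNReal

lemma tsum_pi_prod : ∀ {n : ℕ} (f : Fin n → ℕ → ℝ≥0∞),
    ∑' d : Fin n → ℕ, ∏ j, f j (d j) = ∏ j, ∑' k, f j k := by
  intro n
  induction n with
  | zero =>
      intro f
      simp only [Finset.univ_eq_empty, Finset.prod_empty]
      exact tsum_eq_single (fun i => i.elim0) (fun b hb => absurd (funext fun i => i.elim0) hb) |>.trans rfl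
  | succ n ih =>
      intro f
      rw [← (Fin.consEquiv (fun _ : Fin (n + 1) => ℕ)).tsum_eq, ENNReal.tsum_prod']
      have key : ∀ k : ℕ,
          ∑' d : Fin n → ℕ,
              ∏ j : Fin (n + 1), f j ((Fin.consEquiv fun _ : Fin (n + 1) => ℕ) (k, d) j)
            = f 0 k * ∏ j : Fin n, ∑' x, f j.succ x := by
        intro k
        have h2 : ∀ d : Fin n → ℕ,
            (∏ j : Fin (n + 1), f j ((Fin.consEquiv fun _ : Fin (n + 1) => ℕ) (k, d) j))
              = f 0 k * ∏ j : Fin n, f j.succ (d j) := by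
          intro d
          rw [Fin.prod_univ_succ]
          simp [Fin.consEquiv]
        rw [tsum_congr h2, ENNReal.tsum_mul_left, ih (fun j => f j.succ)]
      rw [tsum_congr key, ENNReal.tsum_mul_right, Fin.prod_univ_succ]

lemma tsum_chain (Q : ℝ≥0∞) :
    ∑' u : {u : Fin (m + 1) → ℕ // Chain π u}, Q ^ (∑ i, (u : Fin (m + 1) → ℕ) i)
      = Q ^ maj π * ∏ j : Fin (m + 1), (1 - Q ^ ((j : ℕ) + 1))⁻¹ := by
  rw [← (chainEquiv π).tsum_eq]
  have h1 : ∀ d : Fin (m + 1) → ℕ,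
      Q ^ (∑ i, ((chainEquiv π d : {u // Chain π u}) : Fin (m + 1) → ℕ) i)
        = Q ^ maj π * ∏ j : Fin (m + 1), Q ^ (((j : ℕ) + 1) * d j) := by
    intro d
    have : (∑ i, ((chainEquiv π d : {u // Chain π u}) : Fin (m+1) → ℕ) i)
        = maj π + ∑ j : Fin (m+1), ((j : ℕ) + 1) * d j := by
      show (∑ i, Phi π d i) = _
      rw [sum_Phi, maj_eq]
      rw [← Finset.sum_add_distrib]
      refine Finset.sum_congr rfl fun j _ => ?_
      ring
    rw [this, pow_add, Finset.prod_pow_eq_pow_sum]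
  calc ∑' d : Fin (m+1) → ℕ, Q ^ (∑ i, ((chainEquiv π d : {u // Chain π u}) : Fin (m+1) → ℕ) i)
      = ∑' d : Fin (m+1) → ℕ, Q ^ maj π * ∏ j : Fin (m+1), Q ^ (((j : ℕ) + 1) * d j) :=
        tsum_congr h1
    _ = Q ^ maj π * ∏ j : Fin (m+1), ∑' k : ℕ, Q ^ (((j : ℕ) + 1) * k) := by
        rw [ENNReal.tsum_mul_left, tsum_pi_prod (fun j k => Q ^ (((j : ℕ) + 1) * k))]
    _ = Q ^ maj π * ∏ j : Fin (m+1), (1 - Q ^ ((j : ℕ) + 1))⁻¹ := by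
        congr 1
        refine Finset.prod_congr rfl fun j _ => ?_
        rw [← ENNReal.tsum_geometric]
        exact tsum_congr fun k => by rw [pow_mul]

end DCP

namespace DCP

variable {m : ℕ} (π : Equiv.Perm (Fin (m + 1)))

lemma descChain_iff (u : Fin (m + 1) → ℕ) :
    DescChain (fun j => u (π.symm j)) π ↔ Chain π u := by
  unfold DescChain Chain
  refine forall_congr' fun i => forall_congr' fun h => ?_
  simp only [Equiv.symm_apply_apply, ds, dif_pos h]
  split_ifs <;> omega

def sChainEquiv : {u : Fin (m + 1) → ℕ // Chain π u} ≃
    {v : Fin (m + 1) → ℕ // DescChain v π} where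
  toFun u := ⟨fun j => (u : Fin (m + 1) → ℕ) (π.symm j), (descChain_iff π _).mpr u.2⟩
  invFun v := ⟨fun j => (v : Fin (m + 1) → ℕ) (π j), by
    refine (descChain_iff π _).mp ?_
    have h : (fun j => (v : Fin (m + 1) → ℕ) (π (π.symm j)))
        = (v : Fin (m + 1) → ℕ) := funext fun j => by rw [Equiv.apply_symm_apply]
    show DescChain (fun j => (v : Fin (m + 1) → ℕ) (π (π.symm j))) π
    rw [h]
    exact v.2⟩
  left_inv u := Subtype.ext (funext fun j => by simp)
  right_inv v := Subtype.ext (funext fun j => by simp)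

lemma sChainEquiv_apply (u : {u : Fin (m + 1) → ℕ // Chain π u}) :
    ((sChainEquiv π u : {v : Fin (m + 1) → ℕ // DescChain v π}) : Fin (m + 1) → ℕ)
      = fun j => (u : Fin (m + 1) → ℕ) (π.symm j) := rfl

end DCP

open scoped ENNReal

/-- For i.i.d. geometric `G₁, …, Gₙ` with parameter `1 - q`, the probability that
`G (π 1) ⊵₁ G (π 2) ⊵₂ ⋯ ⊵_{n-1} G (π n)` — strict at descents of `π`, weak
otherwise — equals `q^{maj π} / [n]_q!`. -/
theorem desc_chain_prob {Ω : Type*} [MeasurableSpace Ω] (μ : Measure Ω)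
    [IsProbabilityMeasure μ] (q : ℝ) (hq0 : 0 < q) (hq1 : q < 1)
    (n : ℕ) (hn : 1 ≤ n) (G : Fin n → Ω → ℕ) (hmeas : ∀ i, Measurable (G i))
    (hindep : iIndepFun G μ)
    (hgeom : ∀ i, ∀ k : ℕ, (μ {ω | G i ω = k}).toReal = q ^ k * (1 - q))
    (π : Equiv.Perm (Fin n)) :
    (μ {ω | DescChain (fun i => G i ω) π}).toReal = q ^ maj π / qfact q n := by
  obtain ⟨m, rfl⟩ : ∃ m, n = m + 1 := ⟨n - 1, by omega⟩
  set Q : ℝ≥0∞ := ENNReal.ofReal q with hQ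
  set c : ℝ≥0∞ := ENNReal.ofReal (1 - q) with hc
  set S : Set (Fin (m + 1) → ℕ) := {v | DescChain v π} with hS
  set A : ↥S → Set Ω := fun v => ⋂ i, G i ⁻¹' {(v : Fin (m + 1) → ℕ) i} with hA
  have hE : {ω | DescChain (fun i => G i ω) π} = ⋃ v : ↥S, A v := by
    ext ω
    simp only [hA, Set.mem_iUnion, Set.mem_setOf_eq, Set.mem_iInter, Set.mem_preimage,
      Set.mem_singleton_iff]
    constructor
    · intro h; exact ⟨⟨fun i => G i ω, h⟩, fun i => rfl⟩
    · rintro ⟨⟨v, hv⟩, h⟩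
      have hvv : (fun i => G i ω) = v := funext h
      rw [hvv]; exact hv
  have hAm : ∀ v, MeasurableSet (A v) :=
    fun v => MeasurableSet.iInter fun i => (hmeas i) (measurableSet_singleton _)
  have hdisj : Pairwise (Function.onFun Disjoint A) := by
    intro v w hvw
    rw [Function.onFun, Set.disjoint_left]
    intro ω hv hw
    apply hvw
    apply Subtype.ext
    funext i
    simp only [hA, Set.mem_iInter, Set.mem_preimage, Set.mem_singleton_iff] at hv hw
    rw [← hv i, ← hw i]
  have hav : ∀ v : ↥S, μ (A v) = Q ^ (∑ i, (v : Fin (m + 1) → ℕ) i) * c ^ (m + 1) := by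
    intro v
    have h1 : μ (A v) = ∏ i, μ (G i ⁻¹' {(v : Fin (m + 1) → ℕ) i}) :=
      hindep.meas_iInter fun i => ⟨{(v : Fin (m + 1) → ℕ) i}, measurableSet_singleton _, rfl⟩
    have h2 : ∀ i, μ (G i ⁻¹' {(v : Fin (m + 1) → ℕ) i})
        = Q ^ ((v : Fin (m + 1) → ℕ) i) * c := by
      intro i
      have h3 : G i ⁻¹' {(v : Fin (m + 1) → ℕ) i} = {ω | G i ω = (v : Fin (m + 1) → ℕ) i} :=
        rfl
      rw [h3, ← ENNReal.ofReal_toReal (measure_ne_top μ _), hgeom i,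
        ENNReal.ofReal_mul (pow_nonneg hq0.le _), ENNReal.ofReal_pow hq0.le]
    rw [h1, Finset.prod_congr rfl (fun i _ => h2 i), Finset.prod_mul_distrib,
      Finset.prod_pow_eq_pow_sum, Finset.prod_const, Finset.card_univ, Fintype.card_fin]
  have hsum : μ {ω | DescChain (fun i => G i ω) π}
      = (∑' v : ↥S, Q ^ (∑ i, (v : Fin (m + 1) → ℕ) i)) * c ^ (m + 1) := by
    rw [hE, measure_iUnion hdisj hAm, ← ENNReal.tsum_mul_right]
    exact tsum_congr hav
  have hreindex : (∑' v : ↥S, Q ^ (∑ i, (v : Fin (m + 1) → ℕ) i))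
      = ∑' u : {u : Fin (m + 1) → ℕ // DCP.Chain π u}, Q ^ (∑ i, (u : Fin (m + 1) → ℕ) i) := by
    have h0 : (∑' v : ↥S, Q ^ (∑ i, (v : Fin (m + 1) → ℕ) i))
        = ∑' v : {v : Fin (m + 1) → ℕ // DescChain v π}, Q ^ (∑ i, (v : Fin (m + 1) → ℕ) i) :=
      rfl
    rw [h0, ← (DCP.sChainEquiv π).tsum_eq]
    refine tsum_congr fun u => ?_
    congr 1
    rw [DCP.sChainEquiv_apply]
    exact Equiv.sum_comp π.symm (u : Fin (m+1) → ℕ)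
  rw [hsum, hreindex, DCP.tsum_chain]
  -- now toReal computations
  have hQ1 : Q < 1 := by rw [hQ]; exact ENNReal.ofReal_lt_one.mpr hq1
  have hQpow : ∀ j : Fin (m + 1), Q ^ ((j : ℕ) + 1) < 1 :=
    fun j => pow_lt_one₀ zero_le hQ1 (Nat.succ_ne_zero _)
  have hne0 : ∀ j : Fin (m + 1), (1 : ℝ≥0∞) - Q ^ ((j : ℕ) + 1) ≠ 0 := by
    intro j
    rw [Ne, tsub_eq_zero_iff_le]
    exact fun h => absurd (lt_of_le_of_lt h (hQpow j)) (lt_irrefl _)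
  have hfin : ∀ j : Fin (m + 1), ((1 : ℝ≥0∞) - Q ^ ((j : ℕ) + 1))⁻¹ ≠ ∞ :=
    fun j => ENNReal.inv_ne_top.mpr (hne0 j)
  have htr : ∀ j : Fin (m + 1), (((1 : ℝ≥0∞) - Q ^ ((j : ℕ) + 1))⁻¹).toReal
      = (1 - q ^ ((j : ℕ) + 1))⁻¹ := by
    intro j
    rw [ENNReal.toReal_inv, ENNReal.toReal_sub_of_le (hQpow j).le ENNReal.one_ne_top,
      ENNReal.toReal_pow, ENNReal.toReal_one, hQ, ENNReal.toReal_ofReal hq0.le]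
  rw [ENNReal.toReal_mul, ENNReal.toReal_mul, ENNReal.toReal_pow, ENNReal.toReal_pow,
    ENNReal.toReal_prod, hQ, hc, ENNReal.toReal_ofReal hq0.le,
    ENNReal.toReal_ofReal (by linarith : (0:ℝ) ≤ 1 - q),
    Finset.prod_congr rfl (fun j _ => htr j)]
  -- pure real arithmetic
  have hqgeom : ∀ M : ℕ, qint q M * (1 - q) = 1 - q ^ M := by
    intro M
    rw [qint]
    linear_combination (-1 : ℝ) * geom_sum_mul q M
  have hpos : ∀ j : ℕ, (0:ℝ) < 1 - q ^ (j + 1) := by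
    intro j
    have : q ^ (j + 1) < 1 := pow_lt_one₀ hq0.le hq1 (by omega)
    linarith
  have hfact : qfact q (m + 1) * (1 - q) ^ (m + 1)
      = ∏ j ∈ Finset.range (m + 1), (1 - q ^ (j + 1)) := by
    have hp : (1 - q) ^ (m + 1) = ∏ _j ∈ Finset.range (m + 1), (1 - q) := by
      rw [Finset.prod_const, Finset.card_range]
    rw [qfact, hp, ← Finset.prod_mul_distrib]
    exact Finset.prod_congr rfl fun j _ => hqgeom (j + 1)
  have hprodpos : (0:ℝ) < ∏ j ∈ Finset.range (m + 1), (1 - q ^ (j + 1)) :=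
    Finset.prod_pos fun j _ => hpos j
  have hqf : qfact q (m + 1) ≠ 0 := by
    intro h
    rw [h, zero_mul] at hfact
    exact absurd hfact.symm (ne_of_gt hprodpos)
  rw [Fin.prod_univ_eq_prod_range (fun j => (1 - q ^ (j + 1))⁻¹) (m + 1),
    Finset.prod_inv_distrib, eq_div_iff hqf]
  have hre : q ^ maj π * (∏ j ∈ Finset.range (m + 1), (1 - q ^ (j + 1)))⁻¹ * (1 - q) ^ (m + 1)
        * qfact q (m + 1)
      = q ^ maj π * ((qfact q (m + 1) * (1 - q) ^ (m + 1))
        * (∏ j ∈ Finset.range (m + 1), (1 - q ^ (j + 1)))⁻¹) := by ring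
  rw [hre, hfact, mul_inv_cancel₀ (ne_of_gt hprodpos), mul_one]
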